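/- In any preskeleton F of a lower finite normed lattice K, every element has at most two lower covers within F. Consequently, if F is upward directed then F is a 2-ladder. -/

import Mathlib

/-- In a preskeleton F of a lower finite normed lattice K, every element has at most two
lower covers within F; consequently, if F is upward directed then F is a 2-ladder (a lower
finite lattice, i.e. every pair in F has a meet and a join within F, in which every element
has at most two lower covers). -/
theorem stmt_12 (K : Type*) [Lattice K] [OrderBot K]
    (hLF : ∀ q : K, (Set.Iic q).Finite)
    (d : K → Ordinal) (hd : ∀ x y : K, d (x ⊔ y) = max (d x) (d y)) (hd0 : d ⊥ = 0)
    (p : K → Ordinal → K)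
    (hp : ∀ (x : K) (ξ : Ordinal), IsGreatest {z : K | z ≤ x ∧ d z ≤ ξ} (p x ξ))
    (F : Set K)
    (hchain : ∀ ξ : Ordinal, IsChain (· ≤ ·) {x ∈ F | d x = ξ})
    (hproj : ∀ x ∈ F, ∀ ξ : Ordinal, p x ξ ∈ F) :
    (∀ x : ↥F, Set.ncard {y : ↥F | y ⋖ x} ≤ 2) ∧
    (DirectedOn (· ≤ ·) F →
      (∀ x : ↥F, (Set.Iic x).Finite) ∧
      (∀ x ∈ F, ∀ y ∈ F, ∃ z : K, IsGreatest {w ∈ F | w ≤ x ∧ w ≤ y} z) ∧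
      (∀ x ∈ F, ∀ y ∈ F, ∃ z : K, IsLeast {w ∈ F | x ≤ w ∧ y ≤ w} z)) := by
  have dmono : ∀ {a b : K}, a ≤ b → d a ≤ d b := by
    intro a b h
    have h2 := hd a b
    rw [sup_eq_right.2 h] at h2
    rw [h2]
    exact le_max_left _ _
  -- key directedness lemma
  have keyD : ∀ o : Ordinal, ∀ a b : K, a ∈ F → b ∈ F → max (d a) (d b) ≤ o →
      ∀ w : K, w ≤ a → w ≤ b → ∃ c, c ∈ F ∧ w ≤ c ∧ c ≤ a ∧ c ≤ b := by
    intro o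
    induction o using Ordinal.induction with
    | _ o IH =>
      intro a b ha hb hmax w hwa hwb
      rcases lt_trichotomy (d a) (d b) with h | h | h
      · set b' := p b (d a) with hb'def
        have hb' := hp b (d a)
        have hwb' : w ≤ b' := hb'.2 ⟨hwb, dmono hwa⟩
        have hdb' : d b' ≤ d a := hb'.1.2
        have hda : d a < o := lt_of_lt_of_le h (le_trans (le_max_right _ _) hmax)
        obtain ⟨c, hcF, hwc, hca, hcb'⟩ :=
          IH (d a) hda a b' ha (hproj b hb (d a)) (max_le le_rfl hdb') w hwa hwb'
        exact ⟨c, hcF, hwc, hca, le_trans hcb' hb'.1.1⟩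
      · rcases eq_or_ne a b with rfl | hne
        · exact ⟨a, ha, hwa, le_rfl, le_rfl⟩
        · rcases hchain (d a) ⟨ha, rfl⟩ ⟨hb, h.symm⟩ hne with hab | hba
          · exact ⟨a, ha, hwa, le_rfl, hab⟩
          · exact ⟨b, hb, hwb, hba, le_rfl⟩
      · set a' := p a (d b) with ha'def
        have ha' := hp a (d b)
        have hwa' : w ≤ a' := ha'.2 ⟨hwa, dmono hwb⟩
        have hda' : d a' ≤ d b := ha'.1.2
        have hdb : d b < o := lt_of_lt_of_le h (le_trans (le_max_left _ _) hmax)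
        obtain ⟨c, hcF, hwc, hca', hcb⟩ :=
          IH (d b) hdb a' b (hproj a ha (d b)) hb (max_le hda' le_rfl) w hwa' hwb
        exact ⟨c, hcF, hwc, le_trans hca' ha'.1.1, hcb⟩
  constructor
  · -- at most two lower covers
    intro x
    -- covers with same pair-comparability are equal
    have hcomp : ∀ y1 y2 : ↥F, y1 ⋖ x → y2 ⋖ x → y1 ≤ y2 → y1 = y2 := by
      intro y1 y2 h1 h2 hle
      rcases eq_or_lt_of_le hle with h | h
      · exact h
      · exact absurd h2.1 (h1.2 h)
    -- covers with smaller d are a projection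
    have hA : ∀ y : ↥F, y ⋖ x → d (y : K) < d (x : K) → (y : K) = p (x : K) (d (y : K)) := by
      intro y hy hdy
      have hq := hp (x : K) (d (y : K))
      have hyq : (y : K) ≤ p (x : K) (d (y : K)) :=
        hq.2 ⟨Subtype.coe_le_coe.2 hy.1.le, le_rfl⟩
      have hqF : p (x : K) (d (y : K)) ∈ F := hproj x x.2 _
      have hqx : p (x : K) (d (y : K)) < (x : K) := by
        rcases eq_or_lt_of_le hq.1.1 with h | h
        · exfalso
          have : d (x : K) ≤ d (y : K) := h ▸ hq.1.2
          exact absurd this (not_le.2 hdy)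
        · exact h
      rcases eq_or_lt_of_le (show y ≤ (⟨_, hqF⟩ : ↥F) from Subtype.coe_le_coe.1 hyq) with h | h
      · exact congrArg Subtype.val h
      · exact absurd (Subtype.coe_lt_coe.1 hqx) (hy.2 h)
    have hAsub : ∀ y1 y2 : ↥F, y1 ⋖ x → y2 ⋖ x →
        d (y1 : K) < d (x : K) → d (y2 : K) < d (x : K) → y1 = y2 := by
      intro y1 y2 h1 h2 hd1 hd2
      rcases le_total (d (y1 : K)) (d (y2 : K)) with h | h
      · refine hcomp y1 y2 h1 h2 (Subtype.coe_le_coe.1 ?_)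
        rw [hA y1 h1 hd1, hA y2 h2 hd2]
        exact (hp (x : K) (d (y2 : K))).2 ⟨(hp (x : K) (d (y1 : K))).1.1,
          le_trans (hp (x : K) (d (y1 : K))).1.2 h⟩
      · refine (hcomp y2 y1 h2 h1 (Subtype.coe_le_coe.1 ?_)).symm
        rw [hA y1 h1 hd1, hA y2 h2 hd2]
        exact (hp (x : K) (d (y1 : K))).2 ⟨(hp (x : K) (d (y2 : K))).1.1,
          le_trans (hp (x : K) (d (y2 : K))).1.2 h⟩
    have hBsub : ∀ y1 y2 : ↥F, y1 ⋖ x → y2 ⋖ x →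
        d (y1 : K) = d (x : K) → d (y2 : K) = d (x : K) → y1 = y2 := by
      intro y1 y2 h1 h2 hd1 hd2
      rcases eq_or_ne y1 y2 with h | hne
      · exact h
      · have hne' : (y1 : K) ≠ (y2 : K) := fun h => hne (Subtype.coe_injective h)
        rcases hchain (d (x : K)) ⟨y1.2, hd1⟩ ⟨y2.2, hd2⟩ hne' with h | h
        · exact hcomp y1 y2 h1 h2 (Subtype.coe_le_coe.1 h)
        · exact (hcomp y2 y1 h2 h1 (Subtype.coe_le_coe.1 h)).symm
    have hdicho : ∀ y : ↥F, y ⋖ x → d (y : K) < d (x : K) ∨ d (y : K) = d (x : K) := by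
      intro y hy
      exact lt_or_eq_of_le (dmono (Subtype.coe_le_coe.2 hy.1.le))
    by_cases hAne : ∃ y : ↥F, y ⋖ x ∧ d (y : K) < d (x : K)
    · obtain ⟨a, haC, had⟩ := hAne
      by_cases hBne : ∃ y : ↥F, y ⋖ x ∧ d (y : K) = d (x : K)
      · obtain ⟨b, hbC, hbd⟩ := hBne
        have hsub : {y : ↥F | y ⋖ x} ⊆ {a, b} := by
          intro y hy
          rcases hdicho y hy with h | h
          · exact Or.inl (hAsub y a hy haC h had)
          · exact Or.inr (hBsub y b hy hbC h hbd)
        calc Set.ncard {y : ↥F | y ⋖ x} ≤ Set.ncard {a, b} :=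
              Set.ncard_le_ncard hsub (Set.toFinite _)
          _ ≤ Set.ncard {b} + 1 := Set.ncard_insert_le _ _
          _ ≤ 2 := by rw [Set.ncard_singleton]
      · have hsub : {y : ↥F | y ⋖ x} ⊆ {a} := by
          intro y hy
          rcases hdicho y hy with h | h
          · exact hAsub y a hy haC h had
          · exact absurd ⟨y, hy, h⟩ hBne
        calc Set.ncard {y : ↥F | y ⋖ x} ≤ Set.ncard {a} :=
              Set.ncard_le_ncard hsub (Set.toFinite _)
          _ ≤ 2 := by rw [Set.ncard_singleton]; omega
    · by_cases hBne : ∃ y : ↥F, y ⋖ x ∧ d (y : K) = d (x : K)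
      · obtain ⟨b, hbC, hbd⟩ := hBne
        have hsub : {y : ↥F | y ⋖ x} ⊆ {b} := by
          intro y hy
          rcases hdicho y hy with h | h
          · exact absurd ⟨y, hy, h⟩ hAne
          · exact hBsub y b hy hbC h hbd
        calc Set.ncard {y : ↥F | y ⋖ x} ≤ Set.ncard {b} :=
              Set.ncard_le_ncard hsub (Set.toFinite _)
          _ ≤ 2 := by rw [Set.ncard_singleton]; omega
      · have hsub : {y : ↥F | y ⋖ x} ⊆ (∅ : Set ↥F) := by
          intro y hy
          rcases hdicho y hy with h | h
          · exact absurd ⟨y, hy, h⟩ hAne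
          · exact absurd ⟨y, hy, h⟩ hBne
        calc Set.ncard {y : ↥F | y ⋖ x} ≤ Set.ncard (∅ : Set ↥F) :=
              Set.ncard_le_ncard hsub (Set.toFinite _)
          _ ≤ 2 := by rw [Set.ncard_empty]; omega
  · intro hdir
    refine ⟨?_, ?_, ?_⟩
    · intro x
      have h1 : (Set.Iic x : Set ↥F) = Subtype.val ⁻¹' Set.Iic (x : K) := rfl
      rw [h1]
      exact Set.Finite.preimage (Subtype.coe_injective.injOn) (hLF _)
    · intro x hx y hy
      set S := {w ∈ F | w ≤ x ∧ w ≤ y} with hSdef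
      have hSfin : S.Finite := (hLF x).subset (fun w hw => hw.2.1)
      have hSne : S.Nonempty := by
        obtain ⟨c, hcF, _, hcx, hcy⟩ :=
          keyD (max (d x) (d y)) x y hx hy le_rfl ⊥ bot_le bot_le
        exact ⟨c, hcF, hcx, hcy⟩
      obtain ⟨m, hmS, hmmax⟩ : ∃ m ∈ S, ∀ c ∈ S, m ≤ c → m = c := by
        obtain ⟨m, hmS, hm⟩ := Set.Finite.exists_maximal hSfin hSne
        exact ⟨m, hmS, fun c hc hmc => le_antisymm hmc (hm hc hmc)⟩
      refine ⟨m, hmS, fun a haS => ?_⟩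
      obtain ⟨c, hcF, hwc, hcx, hcy⟩ :=
        keyD (max (d x) (d y)) x y hx hy le_rfl (m ⊔ a)
          (sup_le hmS.2.1 haS.2.1) (sup_le hmS.2.2 haS.2.2)
      have hcS : c ∈ S := ⟨hcF, hcx, hcy⟩
      have hmc : m ≤ c := le_trans le_sup_left hwc
      have : m = c := hmmax c hcS hmc
      exact le_trans (le_trans le_sup_right hwc) this.symm.le
    · intro x hx y hy
      obtain ⟨z, hzF, hxz, hyz⟩ := hdir x hx y hy
      set U := {w ∈ F | x ≤ w ∧ y ≤ w} with hUdef
      have hzU : z ∈ U := ⟨hzF, hxz, hyz⟩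
      set T := U ∩ Set.Iic z with hTdef
      have hTfin : T.Finite := (hLF z).subset (fun w hw => hw.2)
      have hTne : T.Nonempty := ⟨z, hzU, le_rfl⟩
      obtain ⟨m, hmT, hmmin⟩ : ∃ m ∈ T, ∀ c ∈ T, c ≤ m → m = c := by
        obtain ⟨m, hmT, hm⟩ := Set.Finite.exists_minimal hTfin hTne
        exact ⟨m, hmT, fun c hc hcm => le_antisymm (hm hc hcm) hcm⟩
      refine ⟨m, hmT.1, fun u huU => ?_⟩
      obtain ⟨c, hcF, hwc, hcz, hcu⟩ :=
        keyD (max (d z) (d u)) z u hzF huU.1 le_rfl (x ⊔ y)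
          (sup_le hxz hyz) (sup_le huU.2.1 huU.2.2)
      have hcU : c ∈ U := ⟨hcF, le_trans le_sup_left hwc, le_trans le_sup_right hwc⟩
      obtain ⟨c', hc'F, hwc', hc'm, hc'c⟩ :=
        keyD (max (d m) (d c)) m c hmT.1.1 hcF le_rfl (x ⊔ y)
          (sup_le hmT.1.2.1 hmT.1.2.2) hwc
      have hc'T : c' ∈ T :=
        ⟨⟨hc'F, le_trans le_sup_left hwc', le_trans le_sup_right hwc'⟩, le_trans hc'm hmT.2⟩
      have : m = c' := hmmin c' hc'T hc'm
      exact le_trans (le_trans this.le hc'c) hcu
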